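/- Let G : ℕ → ℂ satisfy G(i+2) = G(i+1) + G(i) for all i ≥ 0, let k be a nonnegative integer, and let w ∈ ℂ with 1 − w − w² ≠ 0. Then ∑_{j=0}^{k} w^j · j · G(j) = ((2 − w)·w²·G(0) + (w² + 1)·w·G(1)) / (1 − w − w²)² + ((k·w² + (k+1)·w − (k+2))·w^{k+2}·G(k)) / (1 − w − w²)² + (((k−1)·w² + k·w − (k+1))·w^{k+1}·G(k+1)) / (1 − w − w²)². -/

import Mathlib

theorem weighted_linear_sum (G : ℕ → ℂ) (hG : ∀ i, G (i + 2) = G (i + 1) + G i)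
    (k : ℕ) (w : ℂ) (hw : 1 - w - w ^ 2 ≠ 0) :
    ∑ j ∈ Finset.range (k + 1), w ^ j * (j : ℂ) * G j =
      ((2 - w) * w ^ 2 * G 0 + (w ^ 2 + 1) * w * G 1) / (1 - w - w ^ 2) ^ 2
      + (((k : ℂ) * w ^ 2 + ((k : ℂ) + 1) * w - ((k : ℂ) + 2)) * w ^ (k + 2) * G k) /
          (1 - w - w ^ 2) ^ 2
      + ((((k : ℂ) - 1) * w ^ 2 + (k : ℂ) * w - ((k : ℂ) + 1)) * w ^ (k + 1) * G (k + 1)) /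
          (1 - w - w ^ 2) ^ 2 := by
  induction k with
  | zero =>
    simp only [zero_add, Finset.sum_range_one, Nat.cast_zero]
    rw [show G 1 = G 1 from rfl]
    field_simp
    ring
  | succ n ih =>
    rw [Finset.sum_range_succ, ih, hG n]
    push_cast
    field_simp
    ring
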